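/- arXiv:1209.4958 — 2 statements merged into one kernel-verified Lean document; each statement's English description precedes it below -/
import Mathlib

section
/- For every lattice cone σ = σ(v₁,v₂) with primitive generators v₁, v₂ ∈ ℤ², one has the identity of formal power series L_σ(x₁,x₂) = Todd_σ^{even}(x₁,x₂) − (|Γ_σ|/4)·x₁x₂ in ℂ[[x₁,x₂]], where Todd_σ^{even}(x₁,x₂) := (Todd_σ(x₁,x₂) + Todd_σ(−x₁,−x₂))/2 is the even part of Todd_σ under (x₁,x₂) ↦ (−x₁,−x₂), and |Γ_σ| is the order of the finite group Γ_σ. -/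
noncomputable section

/-- The twisted Todd series `Todd^λ(S) = S/(1 − λ·e^{−S}) ∈ ℂ[[S]]`.
For `λ = 1` it is the inverse of the power series `(1 − e^{−S})/S` (constant term 1);
for `λ ≠ 1` the series `1 − λe^{−S}` is invertible (constant term `1 − λ`). -/
def ToddPS (l : ℂ) : PowerSeries ℂ :=
  if l = 1 then (PowerSeries.mk fun n => ((-1) ^ n / (n + 1).factorial : ℂ))⁻¹
  else PowerSeries.X * (1 - l • PowerSeries.mk fun n => ((-1) ^ n / n.factorial : ℂ))⁻¹

/-- `L^λ(S) := Todd^λ(S) − S/2`. -/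
def LPS (l : ℂ) : PowerSeries ℂ := ToddPS l - PowerSeries.C (1 / 2 : ℂ) * PowerSeries.X

/-- Substitution of the linear form `c·x₁ + d·x₂` into a univariate power series:
the coefficient of `x₁^{e₀}x₂^{e₁}` of `f(c·x₁ + d·x₂)` is
`coeff_{e₀+e₁}(f)·binom(e₀+e₁,e₀)·c^{e₀}d^{e₁}`. -/
def substLin (c d : ℂ) (f : PowerSeries ℂ) : MvPowerSeries (Fin 2) ℂ :=
  fun e => (PowerSeries.coeff (e 0 + e 1) f) * ((e 0 + e 1).choose (e 0) : ℂ) *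
    c ^ (e 0) * d ^ (e 1)

/-- For a lift `m` of `g ∈ Γ_σ = ℤ²/(ℤw₁+ℤw₂)`, writing `m = a₁w₁ + a₂w₂` with
`a₁, a₂ ∈ ℚ` (Cramer's rule), `χ_{σ,1}(g) = e^{2πi·a₁}`. -/
def char1 (w₁ w₂ m : ℤ × ℤ) : ℂ :=
  Complex.exp (2 * Real.pi * Complex.I *
    (((m.1 * w₂.2 - m.2 * w₂.1 : ℤ) : ℂ) / ((w₁.1 * w₂.2 - w₁.2 * w₂.1 : ℤ) : ℂ)))

/-- As `char1`, for the second coordinate: `χ_{σ,2}(g) = e^{2πi·a₂}`. -/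
def char2 (w₁ w₂ m : ℤ × ℤ) : ℂ :=
  Complex.exp (2 * Real.pi * Complex.I *
    (((w₁.1 * m.2 - w₁.2 * m.1 : ℤ) : ℂ) / ((w₁.1 * w₂.2 - w₁.2 * w₂.1 : ℤ) : ℂ)))

/-- The Todd series of the lattice cone `σ(w₁,w₂)`:
`Todd_σ(x₁,x₂) := Σ_{g∈Γ_σ} Todd^{χ_{σ,1}(g)}(x₁)·Todd^{χ_{σ,2}(g)}(x₂)`. -/
def ToddCone (w₁ w₂ : ℤ × ℤ) : MvPowerSeries (Fin 2) ℂ :=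
  ∑ᶠ g : (ℤ × ℤ) ⧸ Submodule.span ℤ {w₁, w₂},
    substLin 1 0 (ToddPS (char1 w₁ w₂ g.out)) * substLin 0 1 (ToddPS (char2 w₁ w₂ g.out))

/-- `L_σ(x₁,x₂) := Σ_{g∈Γ_σ} L^{χ_{σ,1}(g)}(x₁)·L^{χ_{σ,2}(g)}(x₂)`. -/
def LCone (w₁ w₂ : ℤ × ℤ) : MvPowerSeries (Fin 2) ℂ :=
  ∑ᶠ g : (ℤ × ℤ) ⧸ Submodule.span ℤ {w₁, w₂},
    substLin 1 0 (LPS (char1 w₁ w₂ g.out)) * substLin 0 1 (LPS (char2 w₁ w₂ g.out))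

/-- A lattice vector is primitive if it is not an integer multiple `≥ 2`
of another lattice vector. -/
def IsPrimitiveVec (v : ℤ × ℤ) : Prop := ∀ (n : ℕ) (w : ℤ × ℤ), v = (n : ℤ) • w → n = 1

/-- The image of `T(x₁,x₂)` under `(x₁,x₂) ↦ (−x₁,−x₂)`. -/
def negSub (T : MvPowerSeries (Fin 2) ℂ) : MvPowerSeries (Fin 2) ℂ :=
  fun e => ((-1 : ℂ)) ^ (e 0 + e 1) * T e

/-! ### Auxiliary lemmas -/

open PowerSeries in
private lemma Eneg_eq' : (PowerSeries.mk fun n => ((-1) ^ n / n.factorial : ℂ))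
    = PowerSeries.rescale (-1) (PowerSeries.exp ℂ) := by
  ext n
  rw [coeff_rescale, coeff_exp, coeff_mk]
  push_cast
  ring

open PowerSeries in
private lemma Epos_mul_Eneg' :
    PowerSeries.exp ℂ * PowerSeries.rescale (-1) (PowerSeries.exp ℂ) = 1 := by
  simpa [PowerSeries.evalNegHom] using PowerSeries.exp_mul_exp_neg_eq_one (A := ℂ)

open PowerSeries in
private lemma constCoeff_Epos' :
    PowerSeries.constantCoeff (PowerSeries.exp ℂ) = 1 := by
  simp [PowerSeries.constantCoeff_exp]

open PowerSeries in
private lemma constCoeff_Eneg' :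
    PowerSeries.constantCoeff (PowerSeries.rescale (-1) (PowerSeries.exp ℂ)) = 1 := by
  rw [← coeff_zero_eq_constantCoeff_apply, coeff_rescale]
  simp [PowerSeries.coeff_exp]

open PowerSeries in
private lemma X_mul_G' : (PowerSeries.X : PowerSeries ℂ)
      * PowerSeries.mk (fun n => ((-1) ^ n / (n + 1).factorial : ℂ))
    = 1 - PowerSeries.rescale (-1) (PowerSeries.exp ℂ) := by
  ext n
  rw [← Eneg_eq']
  cases n with
  | zero => simp
  | succ n =>
    rw [PowerSeries.coeff_succ_X_mul, map_sub, coeff_mk, coeff_mk]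
    simp [Nat.factorial_succ, pow_succ]
    ring

open PowerSeries in
private lemma constCoeff_G' : PowerSeries.constantCoeff
    (PowerSeries.mk (fun n => ((-1) ^ n / (n + 1).factorial : ℂ))) = 1 := by
  rw [← coeff_zero_eq_constantCoeff_apply, coeff_mk]; simp

open PowerSeries in
private lemma rescale_G' :
    PowerSeries.rescale (-1) (PowerSeries.mk (fun n => ((-1) ^ n / (n + 1).factorial : ℂ)))
      = PowerSeries.exp ℂ * PowerSeries.mk (fun n => ((-1) ^ n / (n + 1).factorial : ℂ)) := by
  apply mul_left_cancel₀ (PowerSeries.X_ne_zero (R := ℂ))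
  have h1 : (PowerSeries.X : PowerSeries ℂ) * PowerSeries.rescale (-1)
        (PowerSeries.mk (fun n => ((-1) ^ n / (n + 1).factorial : ℂ)))
      = PowerSeries.exp ℂ - 1 := by
    have := congrArg (PowerSeries.rescale (-1 : ℂ)) X_mul_G'
    rw [map_mul, PowerSeries.rescale_neg_one_X, map_sub, map_one,
      PowerSeries.rescale_rescale] at this
    simp only [neg_mul, one_mul, neg_neg, PowerSeries.rescale_one, RingHom.id_apply] at this
    linear_combination -this
  rw [h1]
  calc PowerSeries.exp ℂ - 1
      = PowerSeries.exp ℂ * (1 - PowerSeries.rescale (-1) (PowerSeries.exp ℂ)) := by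
        linear_combination Epos_mul_Eneg'
    _ = PowerSeries.X * (PowerSeries.exp ℂ
          * PowerSeries.mk (fun n => ((-1) ^ n / (n + 1).factorial : ℂ))) := by
        rw [← X_mul_G']; ring

open PowerSeries in
private lemma rescale_inv' (f : PowerSeries ℂ) (hf : PowerSeries.constantCoeff f ≠ 0) :
    PowerSeries.rescale (-1) f⁻¹ = (PowerSeries.rescale (-1) f)⁻¹ := by
  have hc : PowerSeries.constantCoeff (PowerSeries.rescale (-1) f) ≠ 0 := by
    rwa [← coeff_zero_eq_constantCoeff_apply, coeff_rescale, pow_zero, one_mul,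
      coeff_zero_eq_constantCoeff_apply]
  rw [PowerSeries.eq_inv_iff_mul_eq_one hc, ← map_mul,
    PowerSeries.inv_mul_cancel f hf, map_one]

open PowerSeries in
private lemma rescale_C'' (a : ℂ) :
    PowerSeries.rescale (-1) (PowerSeries.C a) = PowerSeries.C a := by
  ext n
  rw [coeff_rescale, PowerSeries.coeff_C]
  split_ifs with h <;> simp [h]

open PowerSeries in
private lemma rescale_Eneg' :
    PowerSeries.rescale (-1) (PowerSeries.rescale (-1) (PowerSeries.exp ℂ))
      = PowerSeries.exp ℂ := by
  rw [PowerSeries.rescale_rescale]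
  norm_num [PowerSeries.rescale_one]

open PowerSeries in
private lemma toddNeg {l : ℂ} (hl : l ≠ 0) :
    PowerSeries.rescale (-1) (ToddPS l⁻¹) = ToddPS l - PowerSeries.X := by
  by_cases h1 : l = 1
  · subst h1
    rw [ToddPS, ToddPS, inv_one, if_pos rfl]
    rw [rescale_inv' _ (by rw [constCoeff_G']; norm_num), rescale_G']
    have hcc : PowerSeries.constantCoeff (PowerSeries.exp ℂ
        * PowerSeries.mk (fun n => ((-1) ^ n / (n + 1).factorial : ℂ))) ≠ 0 := by
      rw [map_mul, constCoeff_Epos', constCoeff_G']; norm_num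
    rw [PowerSeries.inv_eq_iff_mul_eq_one hcc]
    have hG : (PowerSeries.mk (fun n => ((-1) ^ n / (n + 1).factorial : ℂ)))⁻¹
        * PowerSeries.mk (fun n => ((-1) ^ n / (n + 1).factorial : ℂ)) = 1 :=
      PowerSeries.inv_mul_cancel _ (by rw [constCoeff_G']; norm_num)
    calc ((PowerSeries.mk (fun n => ((-1) ^ n / (n + 1).factorial : ℂ)))⁻¹ - PowerSeries.X)
          * (PowerSeries.exp ℂ * PowerSeries.mk (fun n => ((-1) ^ n / (n + 1).factorial : ℂ)))
        = PowerSeries.exp ℂ * ((PowerSeries.mk (fun n => ((-1) ^ n / (n + 1).factorial : ℂ)))⁻¹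
            * PowerSeries.mk (fun n => ((-1) ^ n / (n + 1).factorial : ℂ)))
          - PowerSeries.exp ℂ * (PowerSeries.X
            * PowerSeries.mk (fun n => ((-1) ^ n / (n + 1).factorial : ℂ))) := by ring
      _ = 1 := by rw [hG, X_mul_G']; linear_combination Epos_mul_Eneg'
  · have hinv1 : l⁻¹ ≠ 1 := fun h => h1 (by rw [← inv_inv l, h, inv_one])
    rw [ToddPS, ToddPS, if_neg hinv1, if_neg h1]
    rw [Eneg_eq', smul_eq_C_mul, smul_eq_C_mul]
    have hccA : PowerSeries.constantCoeff
        (1 - PowerSeries.C l * PowerSeries.rescale (-1) (PowerSeries.exp ℂ)) ≠ 0 := by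
      rw [map_sub, map_one, map_mul, PowerSeries.constantCoeff_C, constCoeff_Eneg', mul_one]
      exact sub_ne_zero.mpr (Ne.symm h1)
    have hccB : PowerSeries.constantCoeff
        (1 - PowerSeries.C l⁻¹ * PowerSeries.rescale (-1) (PowerSeries.exp ℂ)) ≠ 0 := by
      rw [map_sub, map_one, map_mul, PowerSeries.constantCoeff_C, constCoeff_Eneg', mul_one]
      exact sub_ne_zero.mpr (Ne.symm hinv1)
    have hccB' : PowerSeries.constantCoeff
        (1 - PowerSeries.C l⁻¹ * PowerSeries.exp ℂ) ≠ 0 := by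
      rw [map_sub, map_one, map_mul, PowerSeries.constantCoeff_C, constCoeff_Epos', mul_one]
      exact sub_ne_zero.mpr (Ne.symm hinv1)
    have hRB : PowerSeries.rescale (-1)
          (1 - PowerSeries.C l⁻¹ * PowerSeries.rescale (-1) (PowerSeries.exp ℂ))
        = 1 - PowerSeries.C l⁻¹ * PowerSeries.exp ℂ := by
      rw [map_sub, map_one, map_mul, rescale_C'', rescale_Eneg']
    rw [map_mul, PowerSeries.rescale_neg_one_X, rescale_inv' _ hccB, hRB]
    have hAinv : (1 - PowerSeries.C l * PowerSeries.rescale (-1) (PowerSeries.exp ℂ))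
        * (1 - PowerSeries.C l * PowerSeries.rescale (-1) (PowerSeries.exp ℂ))⁻¹ = 1 :=
      PowerSeries.mul_inv_cancel _ hccA
    have hC : PowerSeries.C l * PowerSeries.C l⁻¹ = 1 := by
      rw [← map_mul, mul_inv_cancel₀ hl, map_one]
    have hb : (1 - PowerSeries.C l⁻¹ * PowerSeries.exp ℂ)⁻¹
        = -(PowerSeries.C l * PowerSeries.rescale (-1) (PowerSeries.exp ℂ)
            * (1 - PowerSeries.C l * PowerSeries.rescale (-1) (PowerSeries.exp ℂ))⁻¹) := by
      rw [PowerSeries.inv_eq_iff_mul_eq_one hccB']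
      linear_combination hAinv
        + (1 - PowerSeries.C l * PowerSeries.rescale (-1) (PowerSeries.exp ℂ))⁻¹
          * Epos_mul_Eneg'
        + PowerSeries.rescale (-1) (PowerSeries.exp ℂ) * PowerSeries.exp ℂ
          * (1 - PowerSeries.C l * PowerSeries.rescale (-1) (PowerSeries.exp ℂ))⁻¹ * hC
    rw [hb]
    linear_combination (-PowerSeries.X) * hAinv

private lemma char1_ne_zero (v₁ v₂ m : ℤ × ℤ) : char1 v₁ v₂ m ≠ 0 := Complex.exp_ne_zero _
private lemma char2_ne_zero (v₁ v₂ m : ℤ × ℤ) : char2 v₁ v₂ m ≠ 0 := Complex.exp_ne_zero _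

private lemma char1_neg (v₁ v₂ m : ℤ × ℤ) : char1 v₁ v₂ (-m) = (char1 v₁ v₂ m)⁻¹ := by
  rw [char1, char1, ← Complex.exp_neg]
  congr 1
  simp only [Prod.fst_neg, Prod.snd_neg]
  push_cast
  ring

private lemma char2_neg (v₁ v₂ m : ℤ × ℤ) : char2 v₁ v₂ (-m) = (char2 v₁ v₂ m)⁻¹ := by
  rw [char2, char2, ← Complex.exp_neg]
  congr 1
  simp only [Prod.fst_neg, Prod.snd_neg]
  push_cast
  ring

private lemma char1_mk_eq {v₁ v₂ : ℤ × ℤ} (hD : v₁.1 * v₂.2 - v₁.2 * v₂.1 ≠ 0) {m m' : ℤ × ℤ}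
    (h : (Submodule.Quotient.mk m : (ℤ × ℤ) ⧸ Submodule.span ℤ {v₁, v₂})
        = Submodule.Quotient.mk m') :
    char1 v₁ v₂ m = char1 v₁ v₂ m' := by
  rw [Submodule.Quotient.eq] at h
  obtain ⟨a, b, hab⟩ := Submodule.mem_span_pair.mp h
  have h1 : a * v₁.1 + b * v₂.1 = m.1 - m'.1 := by
    have := congrArg Prod.fst hab; simpa using this
  have h2 : a * v₁.2 + b * v₂.2 = m.2 - m'.2 := by
    have := congrArg Prod.snd hab; simpa using this
  have hz : (m.1 * v₂.2 - m.2 * v₂.1 : ℤ)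
      = (m'.1 * v₂.2 - m'.2 * v₂.1) + a * (v₁.1 * v₂.2 - v₁.2 * v₂.1) := by
    linear_combination v₂.1 * h2 - v₂.2 * h1
  have hDc : ((v₁.1 * v₂.2 - v₁.2 * v₂.1 : ℤ) : ℂ) ≠ 0 := by exact_mod_cast hD
  have key : ((m.1 * v₂.2 - m.2 * v₂.1 : ℤ) : ℂ) / ((v₁.1 * v₂.2 - v₁.2 * v₂.1 : ℤ) : ℂ)
      = ((m'.1 * v₂.2 - m'.2 * v₂.1 : ℤ) : ℂ) / ((v₁.1 * v₂.2 - v₁.2 * v₂.1 : ℤ) : ℂ)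
        + (a : ℂ) := by
    rw [show ((m.1 * v₂.2 - m.2 * v₂.1 : ℤ) : ℂ)
        = ((m'.1 * v₂.2 - m'.2 * v₂.1 : ℤ) : ℂ)
          + (a : ℂ) * ((v₁.1 * v₂.2 - v₁.2 * v₂.1 : ℤ) : ℂ) by exact_mod_cast hz]
    rw [add_div, mul_div_assoc, div_self hDc, mul_one]
  rw [char1, char1, key, mul_add, Complex.exp_add]
  rw [show (2 * (Real.pi : ℂ) * Complex.I * (a : ℂ))
      = (a : ℂ) * (2 * Real.pi * Complex.I) by ring,
    Complex.exp_int_mul_two_pi_mul_I, mul_one]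

private lemma char2_mk_eq {v₁ v₂ : ℤ × ℤ} (hD : v₁.1 * v₂.2 - v₁.2 * v₂.1 ≠ 0) {m m' : ℤ × ℤ}
    (h : (Submodule.Quotient.mk m : (ℤ × ℤ) ⧸ Submodule.span ℤ {v₁, v₂})
        = Submodule.Quotient.mk m') :
    char2 v₁ v₂ m = char2 v₁ v₂ m' := by
  rw [Submodule.Quotient.eq] at h
  obtain ⟨a, b, hab⟩ := Submodule.mem_span_pair.mp h
  have h1 : a * v₁.1 + b * v₂.1 = m.1 - m'.1 := by
    have := congrArg Prod.fst hab; simpa using this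
  have h2 : a * v₁.2 + b * v₂.2 = m.2 - m'.2 := by
    have := congrArg Prod.snd hab; simpa using this
  have hz : (v₁.1 * m.2 - v₁.2 * m.1 : ℤ)
      = (v₁.1 * m'.2 - v₁.2 * m'.1) + b * (v₁.1 * v₂.2 - v₁.2 * v₂.1) := by
    linear_combination v₁.2 * h1 - v₁.1 * h2
  have hDc : ((v₁.1 * v₂.2 - v₁.2 * v₂.1 : ℤ) : ℂ) ≠ 0 := by exact_mod_cast hD
  have key : ((v₁.1 * m.2 - v₁.2 * m.1 : ℤ) : ℂ) / ((v₁.1 * v₂.2 - v₁.2 * v₂.1 : ℤ) : ℂ)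
      = ((v₁.1 * m'.2 - v₁.2 * m'.1 : ℤ) : ℂ) / ((v₁.1 * v₂.2 - v₁.2 * v₂.1 : ℤ) : ℂ)
        + (b : ℂ) := by
    rw [show ((v₁.1 * m.2 - v₁.2 * m.1 : ℤ) : ℂ)
        = ((v₁.1 * m'.2 - v₁.2 * m'.1 : ℤ) : ℂ)
          + (b : ℂ) * ((v₁.1 * v₂.2 - v₁.2 * v₂.1 : ℤ) : ℂ) by exact_mod_cast hz]
    rw [add_div, mul_div_assoc, div_self hDc, mul_one]
  rw [char2, char2, key, mul_add, Complex.exp_add]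
  rw [show (2 * (Real.pi : ℂ) * Complex.I * (b : ℂ))
      = (b : ℂ) * (2 * Real.pi * Complex.I) by ring,
    Complex.exp_int_mul_two_pi_mul_I, mul_one]

private lemma smul_mem_span {v₁ v₂ : ℤ × ℤ} (x : ℤ × ℤ) :
    (v₁.1 * v₂.2 - v₁.2 * v₂.1) • x ∈ Submodule.span ℤ {v₁, v₂} := by
  have hx : (v₁.1 * v₂.2 - v₁.2 * v₂.1) • x
      = (x.1 * v₂.2 - x.2 * v₂.1) • v₁ + (v₁.1 * x.2 - v₁.2 * x.1) • v₂ := by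
    apply Prod.ext <;> simp [smul_eq_mul] <;> ring
  rw [hx]
  exact Submodule.add_mem _
    (Submodule.smul_mem _ _ (Submodule.subset_span (by simp)))
    (Submodule.smul_mem _ _ (Submodule.subset_span (by simp)))

private lemma finite_quot {v₁ v₂ : ℤ × ℤ} (hD : v₁.1 * v₂.2 - v₁.2 * v₂.1 ≠ 0) :
    Finite ((ℤ × ℤ) ⧸ Submodule.span ℤ {v₁, v₂}) := by
  set D := v₁.1 * v₂.2 - v₁.2 * v₂.1 with hDdef
  set n := D.natAbs with hn
  haveI : NeZero n := ⟨by simpa [hn] using hD⟩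
  have hsm : ∀ x : ℤ × ℤ, (n : ℤ) • x ∈ Submodule.span ℤ {v₁, v₂} := by
    intro x
    rcases Int.natAbs_eq D with h | h
    · rw [← h]; exact smul_mem_span x
    · have : (n : ℤ) • x = D • (-x) := by rw [h, neg_smul, smul_neg, neg_neg]
      rw [this]; exact smul_mem_span (-x)
  apply Finite.of_surjective
    (fun p : ZMod n × ZMod n =>
      (Submodule.Quotient.mk ((p.1.val : ℤ), (p.2.val : ℤ)) :
        (ℤ × ℤ) ⧸ Submodule.span ℤ {v₁, v₂}))
  intro q
  obtain ⟨⟨x, y⟩, rfl⟩ := Submodule.Quotient.mk_surjective _ q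
  refine ⟨((x : ZMod n), (y : ZMod n)), ?_⟩
  rw [Submodule.Quotient.eq]
  have dx : (n : ℤ) ∣ (((x : ZMod n).val : ℤ) - x) := by
    rw [← ZMod.intCast_zmod_eq_zero_iff_dvd]
    push_cast
    simp [ZMod.natCast_val, ZMod.intCast_cast]
  have dy : (n : ℤ) ∣ (((y : ZMod n).val : ℤ) - y) := by
    rw [← ZMod.intCast_zmod_eq_zero_iff_dvd]
    push_cast
    simp [ZMod.natCast_val, ZMod.intCast_cast]
  obtain ⟨s, hs⟩ := dx
  obtain ⟨t, ht⟩ := dy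
  have h1 : ((((x : ZMod n).val : ℤ), ((y : ZMod n).val : ℤ)) : ℤ × ℤ) - (x, y)
      = ((((x : ZMod n).val : ℤ) - x, ((y : ZMod n).val : ℤ) - y) : ℤ × ℤ) := rfl
  have h2 : (n : ℤ) • ((s, t) : ℤ × ℤ) = (((n : ℤ) * s, (n : ℤ) * t) : ℤ × ℤ) := rfl
  rw [h1, show ((((x : ZMod n).val : ℤ) - x, ((y : ZMod n).val : ℤ) - y) : ℤ × ℤ)
      = (n : ℤ) • ((s, t) : ℤ × ℤ) by rw [h2, Prod.mk.injEq]; exact ⟨hs, ht⟩]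
  exact hsm _

private lemma coeff_substLin10 (f : PowerSeries ℂ) (d : Fin 2 →₀ ℕ) :
    MvPowerSeries.coeff d (substLin 1 0 f)
      = if d 1 = 0 then PowerSeries.coeff (d 0) f else 0 := by
  show substLin 1 0 f d = _
  rw [substLin]
  split_ifs with h
  · rw [h]; simp
  · rw [zero_pow h, mul_zero]

private lemma coeff_substLin01 (f : PowerSeries ℂ) (d : Fin 2 →₀ ℕ) :
    MvPowerSeries.coeff d (substLin 0 1 f)
      = if d 0 = 0 then PowerSeries.coeff (d 1) f else 0 := by
  show substLin 0 1 f d = _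
  rw [substLin]
  split_ifs with h
  · rw [h]; simp
  · rw [zero_pow h]; ring

private lemma fin2_eq (e : Fin 2 →₀ ℕ) :
    e = Finsupp.single 0 (e 0) + Finsupp.single 1 (e 1) := by
  ext i
  fin_cases i <;> simp [Finsupp.single_apply]

private lemma substLin_mul_apply (f h : PowerSeries ℂ) (e : Fin 2 →₀ ℕ) :
    MvPowerSeries.coeff e (substLin 1 0 f * substLin 0 1 h)
      = PowerSeries.coeff (e 0) f * PowerSeries.coeff (e 1) h := by
  rw [MvPowerSeries.coeff_mul]
  rw [Finset.sum_eq_single (Finsupp.single 0 (e 0), Finsupp.single 1 (e 1))]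
  · rw [coeff_substLin10, coeff_substLin01]
    simp [Finsupp.single_apply]
  · rintro ⟨p, q⟩ hmem hne
    rw [Finset.HasAntidiagonal.mem_antidiagonal] at hmem
    rw [coeff_substLin10, coeff_substLin01]
    by_cases hp : p 1 = 0
    · by_cases hq : q 0 = 0
      · exfalso
        apply hne
        have hp0 : p 0 = e 0 := by
          have := congrArg (fun z : Fin 2 →₀ ℕ => z 0) hmem
          simpa [hq] using this
        have hq1 : q 1 = e 1 := by
          have := congrArg (fun z : Fin 2 →₀ ℕ => z 1) hmem
          simpa [hp] using this
        have hpe : p = Finsupp.single 0 (e 0) := by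
          ext i; fin_cases i <;> simp [Finsupp.single_apply, hp0, hp]
        have hqe : q = Finsupp.single 1 (e 1) := by
          ext i; fin_cases i <;> simp [Finsupp.single_apply, hq1, hq]
        rw [Prod.mk.injEq]
        exact ⟨hpe, hqe⟩
      · rw [if_neg hq, mul_zero]
    · rw [if_neg hp, zero_mul]
  · intro hnotmem
    exfalso
    exact hnotmem (by rw [Finset.HasAntidiagonal.mem_antidiagonal]; exact (fin2_eq e).symm)

private lemma coeff_negSub (T : MvPowerSeries (Fin 2) ℂ) (e : Fin 2 →₀ ℕ) :
    MvPowerSeries.coeff e (negSub T)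
      = (-1 : ℂ) ^ (e 0 + e 1) * MvPowerSeries.coeff e T := rfl

private lemma coeff_LPS (l : ℂ) (m : ℕ) :
    PowerSeries.coeff m (LPS l)
      = PowerSeries.coeff m (ToddPS l)
        - (1 / 2 : ℂ) * (if m = 1 then 1 else 0) := by
  rw [LPS, map_sub, PowerSeries.coeff_C_mul, PowerSeries.coeff_X]

private lemma coeff_CXX (a : ℂ) (e : Fin 2 →₀ ℕ) :
    MvPowerSeries.coeff e
        (MvPowerSeries.C a * MvPowerSeries.X 0 * MvPowerSeries.X 1)
      = a * ((if e 0 = 1 then (1 : ℂ) else 0) * (if e 1 = 1 then (1 : ℂ) else 0)) := by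
  have hXX : (MvPowerSeries.X 0 * MvPowerSeries.X 1 : MvPowerSeries (Fin 2) ℂ)
      = MvPowerSeries.monomial (Finsupp.single 0 1 + Finsupp.single 1 1) 1 := by
    rw [MvPowerSeries.X_def, MvPowerSeries.X_def, MvPowerSeries.monomial_mul_monomial, one_mul]
  rw [mul_assoc, MvPowerSeries.coeff_C_mul, hXX, MvPowerSeries.coeff_monomial]
  congr 1
  have hiff : (e = Finsupp.single 0 1 + Finsupp.single 1 1) ↔ (e 0 = 1 ∧ e 1 = 1) := by
    constructor
    · intro h
      constructor <;> (rw [h]; simp [Finsupp.single_apply])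
    · rintro ⟨h0, h1⟩
      conv_lhs => rw [fin2_eq e]
      rw [h0, h1]
  by_cases h : e 0 = 1 ∧ e 1 = 1
  · rw [if_pos (hiff.mpr h), if_pos h.1, if_pos h.2, one_mul]
  · rw [if_neg (fun hh => h (hiff.mp hh))]
    rcases not_and_or.mp h with h' | h'
    · rw [if_neg h', zero_mul]
    · rw [if_neg h', mul_zero]

/- STATEMENT 3: `L_σ = Todd_σ^{even} − (|Γ_σ|/4)·x₁x₂`. -/
theorem stmt_3 (v₁ v₂ : ℤ × ℤ) (hprim₁ : IsPrimitiveVec v₁) (hprim₂ : IsPrimitiveVec v₂)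
    (hindep : v₁.1 * v₂.2 - v₁.2 * v₂.1 ≠ 0) :
    LCone v₁ v₂ =
      MvPowerSeries.C (1 / 2 : ℂ) * (ToddCone v₁ v₂ + negSub (ToddCone v₁ v₂))
      - MvPowerSeries.C
          ((Nat.card ((ℤ × ℤ) ⧸ Submodule.span ℤ {v₁, v₂}) : ℂ) / 4) *
        MvPowerSeries.X 0 * MvPowerSeries.X 1 := by
  classical
  haveI hfinQ : Finite ((ℤ × ℤ) ⧸ Submodule.span ℤ {v₁, v₂}) := finite_quot hindep
  letI : Fintype ((ℤ × ℤ) ⧸ Submodule.span ℤ {v₁, v₂}) := Fintype.ofFinite _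
  apply MvPowerSeries.ext
  intro e
  set x : ℂ := if e 0 = 1 then 1 else 0 with hx
  set y : ℂ := if e 1 = 1 then 1 else 0 with hy
  have hquotneg : ∀ g : (ℤ × ℤ) ⧸ Submodule.span ℤ {v₁, v₂},
      char1 v₁ v₂ (-g).out = (char1 v₁ v₂ g.out)⁻¹
        ∧ char2 v₁ v₂ (-g).out = (char2 v₁ v₂ g.out)⁻¹ := by
    intro g
    have hmk : (Submodule.Quotient.mk ((-g).out) : (ℤ × ℤ) ⧸ Submodule.span ℤ {v₁, v₂})
        = Submodule.Quotient.mk (-(g.out)) := by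
      have o1 : (Submodule.Quotient.mk ((-g).out) : (ℤ × ℤ) ⧸ Submodule.span ℤ {v₁, v₂})
          = -g := Quotient.out_eq _
      have o2 : (Submodule.Quotient.mk (g.out) : (ℤ × ℤ) ⧸ Submodule.span ℤ {v₁, v₂})
          = g := Quotient.out_eq _
      rw [o1, Submodule.Quotient.mk_neg, o2]
    exact ⟨(char1_mk_eq hindep hmk).trans (char1_neg v₁ v₂ g.out),
      (char2_mk_eq hindep hmk).trans (char2_neg v₁ v₂ g.out)⟩
  -- coefficient of LCone
  rw [LCone, finsum_eq_sum_of_fintype, map_sum]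
  simp only [substLin_mul_apply]
  -- RHS
  rw [map_sub, MvPowerSeries.coeff_C_mul, map_add, coeff_CXX, coeff_negSub]
  rw [ToddCone, finsum_eq_sum_of_fintype, map_sum]
  simp only [substLin_mul_apply]
  -- reindex the negated sum
  have reindex : (-1 : ℂ) ^ (e 0 + e 1) * ∑ g : (ℤ × ℤ) ⧸ Submodule.span ℤ {v₁, v₂},
        PowerSeries.coeff (e 0) (ToddPS (char1 v₁ v₂ g.out))
          * PowerSeries.coeff (e 1) (ToddPS (char2 v₁ v₂ g.out))
      = ∑ g : (ℤ × ℤ) ⧸ Submodule.span ℤ {v₁, v₂},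
          (PowerSeries.coeff (e 0) (ToddPS (char1 v₁ v₂ g.out)) - x)
            * (PowerSeries.coeff (e 1) (ToddPS (char2 v₁ v₂ g.out)) - y) := by
    rw [Finset.mul_sum]
    apply Fintype.sum_equiv (Equiv.neg ((ℤ × ℤ) ⧸ Submodule.span ℤ {v₁, v₂}))
    intro g
    rw [Equiv.neg_apply, (hquotneg g).1, (hquotneg g).2]
    have t1 := congrArg (PowerSeries.coeff (e 0))
      (toddNeg (l := (char1 v₁ v₂ g.out)⁻¹) (inv_ne_zero (char1_ne_zero v₁ v₂ g.out)))
    have t2 := congrArg (PowerSeries.coeff (e 1))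
      (toddNeg (l := (char2 v₁ v₂ g.out)⁻¹) (inv_ne_zero (char2_ne_zero v₁ v₂ g.out)))
    rw [inv_inv, PowerSeries.coeff_rescale, map_sub, PowerSeries.coeff_X] at t1 t2
    rw [pow_add, mul_mul_mul_comm, t1, t2, hx, hy]
  rw [reindex]
  -- final scalar computation
  have expand : ∀ g : (ℤ × ℤ) ⧸ Submodule.span ℤ {v₁, v₂},
      PowerSeries.coeff (e 0) (LPS (char1 v₁ v₂ g.out))
          * PowerSeries.coeff (e 1) (LPS (char2 v₁ v₂ g.out))
        = (1 / 2 : ℂ) * (PowerSeries.coeff (e 0) (ToddPS (char1 v₁ v₂ g.out))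
              * PowerSeries.coeff (e 1) (ToddPS (char2 v₁ v₂ g.out)))
          + (1 / 2 : ℂ) * ((PowerSeries.coeff (e 0) (ToddPS (char1 v₁ v₂ g.out)) - x)
              * (PowerSeries.coeff (e 1) (ToddPS (char2 v₁ v₂ g.out)) - y))
          - (1 / 4 : ℂ) * (x * y) := by
    intro g
    rw [coeff_LPS, coeff_LPS, ← hx, ← hy]
    ring
  rw [Finset.sum_congr rfl fun g _ => expand g]
  rw [Finset.sum_sub_distrib, Finset.sum_add_distrib, ← Finset.mul_sum, ← Finset.mul_sum,
    Finset.sum_const, Finset.card_univ, nsmul_eq_mul,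
    Nat.card_eq_fintype_card]
  ring

end
end

section
/- For every integer k ≥ 0, every real number A > 0 and all real numbers a, b: Σ_{i=0}^{2k} binom(2k+1, i+1)·(a^{i+1} + b^{i+1})·[∂_{h₂}ⁱ∂_{h₁}^{2k−i} e^{−A(h₂² − (a+b)h₁h₂ + h₁²)}]|_{(h₁,h₂)=(0,0)} + 2·∫₀^∞ [∂_{x₁}^{2k+1} e^{−A(x₂² + (a+b)x₁x₂ + x₁²)}]|_{x₁=0} dx₂ = 0. -/
noncomputable section

/-- first-coordinate partial derivative of a function on `ℝ × ℝ`. -/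
def pd1 (f : ℝ × ℝ → ℝ) : ℝ × ℝ → ℝ := fun p => deriv (fun x => f (x, p.2)) p.1

/-- second-coordinate partial derivative of a function on `ℝ × ℝ`. -/
def pd2 (f : ℝ × ℝ → ℝ) : ℝ × ℝ → ℝ := fun p => deriv (fun y => f (p.1, y)) p.2

namespace Stmt16Aux

open MvPolynomial Real

abbrev Mv := MvPolynomial (Fin 2) ℝ

def qp (A β : ℝ) : Mv := C (-A) * (X 1 ^ 2 + C β * X 0 * X 1 + X 0 ^ 2)

def Φ (A β : ℝ) (p : Mv) (x y : ℝ) : ℝ :=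
  eval ![x, y] p * Real.exp (eval ![x, y] (qp A β))

def DX (A β : ℝ) : Module.End ℝ Mv :=
  (pderiv 0).toLinearMap + LinearMap.mulLeft ℝ (pderiv 0 (qp A β))

def DY (A β : ℝ) : Module.End ℝ Mv :=
  (pderiv 1).toLinearMap + LinearMap.mulLeft ℝ (pderiv 1 (qp A β))

lemma eval_qp (A β x y : ℝ) : eval ![x, y] (qp A β) = -A * (y ^ 2 + β * x * y + x ^ 2) := by
  simp [qp]

lemma hasDerivAt_eval (p : Mv) (u v x y t : ℝ) :
    HasDerivAt (fun s => eval ![x + u * s, y + v * s] p)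
      (u * eval ![x + u * t, y + v * t] (pderiv 0 p)
        + v * eval ![x + u * t, y + v * t] (pderiv 1 p)) t := by
  induction p using MvPolynomial.induction_on with
  | C c => simpa using hasDerivAt_const t (c : ℝ)
  | add p q hp hq =>
    convert hp.fun_add hq using 1
    · rfl
    · rfl
    · funext s
      rw [map_add]
    · rw [map_add, map_add, map_add, map_add]
      ring
  | mul_X p n hp =>
    have h01 : ∀ m : Fin 2, m = 0 ∨ m = 1 := by decide
    rcases h01 n with rfl | rfl
    · have hX : HasDerivAt (fun s : ℝ => x + u * s) u t := by
        simpa using ((hasDerivAt_id t).const_mul u).const_add x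
      have h2 : HasDerivAt (fun s : ℝ => eval ![x + u * s, y + v * s] (p * X 0))
          ((u * eval ![x + u * t, y + v * t] (pderiv 0 p)
              + v * eval ![x + u * t, y + v * t] (pderiv 1 p)) * (x + u * t)
            + eval ![x + u * t, y + v * t] p * u) t := by
        simpa only [eval_mul, eval_X, Matrix.cons_val_zero] using hp.fun_mul hX
      convert h2 using 1
      simp only [pderiv_mul, pderiv_X_self, pderiv_X_of_ne (show (0:Fin 2) ≠ 1 by decide),
        eval_mul, eval_add, eval_X, Matrix.cons_val_zero, Matrix.cons_val_one, Matrix.head_cons,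
        mul_one, mul_zero, add_zero, eval_zero]
      ring
    · have hX : HasDerivAt (fun s : ℝ => y + v * s) v t := by
        simpa using ((hasDerivAt_id t).const_mul v).const_add y
      have h2 : HasDerivAt (fun s : ℝ => eval ![x + u * s, y + v * s] (p * X 1))
          ((u * eval ![x + u * t, y + v * t] (pderiv 0 p)
              + v * eval ![x + u * t, y + v * t] (pderiv 1 p)) * (y + v * t)
            + eval ![x + u * t, y + v * t] p * v) t := by
        simpa only [eval_mul, eval_X, Matrix.cons_val_one, Matrix.head_cons, Matrix.cons_val_zero] using hp.fun_mul hX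
      convert h2 using 1
      simp only [pderiv_mul, pderiv_X_self, pderiv_X_of_ne (show (1:Fin 2) ≠ 0 by decide),
        eval_mul, eval_add, eval_X, Matrix.cons_val_zero, Matrix.cons_val_one, Matrix.head_cons,
        mul_one, mul_zero, add_zero, eval_zero]
      ring

lemma Φ_add (A β : ℝ) (p q : Mv) (x y : ℝ) : Φ A β (p + q) x y = Φ A β p x y + Φ A β q x y := by
  simp [Φ, add_mul]

lemma Φ_smul (A β c : ℝ) (p : Mv) (x y : ℝ) : Φ A β (c • p) x y = c * Φ A β p x y := by
  simp [Φ, smul_eq_C_mul, mul_assoc]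

lemma Φ_sub (A β : ℝ) (p q : Mv) (x y : ℝ) : Φ A β (p - q) x y = Φ A β p x y - Φ A β q x y := by
  simp [Φ, sub_mul]

lemma Φ_sum {ι : Type*} (A β : ℝ) (s : Finset ι) (p : ι → Mv) (x y : ℝ) :
    Φ A β (∑ i ∈ s, p i) x y = ∑ i ∈ s, Φ A β (p i) x y := by
  simp [Φ, Finset.sum_mul]

lemma hasDerivAt_Φ_line (A β : ℝ) (p : Mv) (u v x y t : ℝ) :
    HasDerivAt (fun s => Φ A β p (x + u * s) (y + v * s))
      (u * Φ A β (DX A β p) (x + u * t) (y + v * t)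
        + v * Φ A β (DY A β p) (x + u * t) (y + v * t)) t := by
  have h1 := hasDerivAt_eval p u v x y t
  have h2 := (hasDerivAt_eval (qp A β) u v x y t).exp
  have h3 := h1.fun_mul h2
  convert h3 using 1
  · rfl
  · rfl
  · rfl
  simp only [Φ, DX, DY, LinearMap.add_apply, LinearMap.mulLeft_apply, map_add, eval_mul,
    Derivation.coeFn_coe]
  ring

lemma hasDerivAt_Φ_x (A β : ℝ) (p : Mv) (x y : ℝ) :
    HasDerivAt (fun s => Φ A β p s y) (Φ A β (DX A β p) x y) x := by
  have := hasDerivAt_Φ_line A β p 1 0 0 y x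
  simpa using this

lemma hasDerivAt_Φ_y (A β : ℝ) (p : Mv) (x y : ℝ) :
    HasDerivAt (fun s => Φ A β p x s) (Φ A β (DY A β p) x y) y := by
  have := hasDerivAt_Φ_line A β p 0 1 x 0 y
  simpa using this

lemma hasDerivAt_Φ_diag (A β a : ℝ) (p : Mv) (y t : ℝ) :
    HasDerivAt (fun s => Φ A β p s (y + a * s))
      (Φ A β ((DX A β + a • DY A β) p) t (y + a * t)) t := by
  have := hasDerivAt_Φ_line A β p 1 a 0 y t
  simp only [zero_add, one_mul] at this
  convert this using 1
  simp only [LinearMap.add_apply, LinearMap.smul_apply, Φ_add, Φ_smul]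

lemma deriv_iter_x (A β : ℝ) (p : Mv) (n : ℕ) (y : ℝ) :
    deriv^[n] (fun s => Φ A β p s y) = fun x => Φ A β (((DX A β) ^ n) p) x y := by
  induction n with
  | zero => simp
  | succ n ih =>
    rw [Function.iterate_succ_apply', ih]
    funext x
    rw [pow_succ']
    exact ((hasDerivAt_Φ_x A β (((DX A β) ^ n) p) x y).congr_deriv
      (by rw [Module.End.mul_apply])).deriv

lemma deriv_iter_y (A β : ℝ) (p : Mv) (n : ℕ) (x : ℝ) :
    deriv^[n] (fun s => Φ A β p x s) = fun y => Φ A β (((DY A β) ^ n) p) x y := by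
  induction n with
  | zero => simp
  | succ n ih =>
    rw [Function.iterate_succ_apply', ih]
    funext y
    rw [pow_succ']
    exact ((hasDerivAt_Φ_y A β (((DY A β) ^ n) p) x y).congr_deriv
      (by rw [Module.End.mul_apply])).deriv

lemma deriv_iter_diag (A β a : ℝ) (p : Mv) (n : ℕ) (y : ℝ) :
    deriv^[n] (fun s => Φ A β p s (y + a * s))
      = fun t => Φ A β (((DX A β + a • DY A β) ^ n) p) t (y + a * t) := by
  induction n with
  | zero => simp
  | succ n ih =>
    rw [Function.iterate_succ_apply', ih]
    funext t
    rw [pow_succ']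
    exact ((hasDerivAt_Φ_diag A β a (((DX A β + a • DY A β) ^ n) p) y t).congr_deriv
      (by rw [Module.End.mul_apply])).deriv

lemma pd_comm (p : Mv) : pderiv (0 : Fin 2) (pderiv 1 p) = pderiv 1 (pderiv 0 p) := by
  induction p using MvPolynomial.induction_on with
  | C c => simp
  | add p q hp hq => simp [hp, hq]
  | mul_X p n hp =>
    have h01 : ∀ m : Fin 2, m = 0 ∨ m = 1 := by decide
    have e01 : pderiv (0 : Fin 2) (X 1 : Mv) = 0 := pderiv_X_of_ne (by decide)
    have e10 : pderiv (1 : Fin 2) (X 0 : Mv) = 0 := pderiv_X_of_ne (by decide)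
    rcases h01 n with rfl | rfl <;>
      simp only [pderiv_mul, pderiv_X_self, e01, e10, mul_one, mul_zero, add_zero, zero_add,
        map_add, pderiv_mul, hp, map_one, map_zero] <;> ring

lemma commute_DXY (A β : ℝ) : Commute (DX A β) (DY A β) := by
  have hq := pd_comm (qp A β)
  refine LinearMap.ext fun p => ?_
  have hp := pd_comm p
  simp only [Module.End.mul_apply, DX, DY, LinearMap.add_apply, LinearMap.mulLeft_apply,
    Derivation.coeFn_coe, map_add, pderiv_mul, hp, hq]
  ring

lemma diag_pow_apply (A β a : ℝ) (n : ℕ) :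
    ((DX A β + a • DY A β) ^ n) (1 : Mv) =
      ∑ j ∈ Finset.range (n + 1),
        (((n.choose j : ℕ) : ℝ) * a ^ j) • ((DY A β) ^ j) (((DX A β) ^ (n - j)) 1) := by
  have hc : Commute (a • DY A β) (DX A β) := ((commute_DXY A β).symm.smul_left a)
  rw [show DX A β + a • DY A β = a • DY A β + DX A β from add_comm _ _, hc.add_pow]
  rw [LinearMap.sum_apply]
  refine Finset.sum_congr rfl fun j hj => ?_
  rw [Module.End.mul_apply, Module.End.mul_apply, Module.End.natCast_apply, smul_pow,
    LinearMap.smul_apply, map_nsmul, map_nsmul, ← Nat.cast_smul_eq_nsmul ℝ, smul_smul,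
    mul_comm]


lemma pd1_iter (F : ℝ × ℝ → ℝ) (n : ℕ) (y : ℝ) :
    ∀ x, pd1^[n] F (x, y) = deriv^[n] (fun t => F (t, y)) x := by
  induction n with
  | zero => intro x; rfl
  | succ n ih =>
    intro x
    rw [Function.iterate_succ_apply', Function.iterate_succ_apply']
    show deriv (fun t => pd1^[n] F (t, y)) x = _
    congr 1
    funext t
    exact ih t

lemma pd2_iter (F : ℝ × ℝ → ℝ) (n : ℕ) (x : ℝ) :
    ∀ y, pd2^[n] F (x, y) = deriv^[n] (fun t => F (x, t)) y := by
  induction n with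
  | zero => intro y; rfl
  | succ n ih =>
    intro y
    rw [Function.iterate_succ_apply', Function.iterate_succ_apply']
    show deriv (fun t => pd2^[n] F (x, t)) y = _
    congr 1
    funext t
    exact ih t

lemma deriv_iter_comp_neg (F : ℝ → ℝ) (n : ℕ) :
    ∀ x, deriv^[n] (fun t => F (-t)) x = (-1 : ℝ) ^ n * deriv^[n] F (-x) := by
  induction n with
  | zero => intro x; simp
  | succ n ih =>
    intro x
    rw [Function.iterate_succ_apply', Function.iterate_succ_apply']
    rw [show deriv^[n] (fun t => F (-t)) = fun s => (-1 : ℝ) ^ n * deriv^[n] F (-s) from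
      funext ih]
    rw [deriv_const_mul_field, deriv_comp_neg]
    ring

def sl (p : Mv) : Polynomial ℝ := aeval ![(0 : Polynomial ℝ), Polynomial.X] p

lemma eval_sl (p : Mv) (y : ℝ) : eval ![0, y] p = (sl p).eval y := by
  induction p using MvPolynomial.induction_on with
  | C c => simp [sl]
  | add p q hp hq => simp [sl, hp, hq]
  | mul_X p n hp =>
    have h01 : ∀ m : Fin 2, m = 0 ∨ m = 1 := by decide
    rcases h01 n with rfl | rfl <;> simp [sl, hp]

lemma Φ_at0 (A β : ℝ) (p : Mv) (y : ℝ) :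
    Φ A β p 0 y = (sl p).eval y * rexp (-A * y ^ 2) := by
  rw [Φ, eval_qp, eval_sl]
  norm_num

lemma integrable_poly_gauss {A : ℝ} (hA : 0 < A) (r : Polynomial ℝ) :
    MeasureTheory.Integrable fun y : ℝ => r.eval y * rexp (-A * y ^ 2) := by
  have base : ∀ n : ℕ, MeasureTheory.Integrable fun y : ℝ => y ^ n * rexp (-A * y ^ 2) := by
    intro n
    have hlt : (-1 : ℝ) < (n : ℝ) := lt_of_lt_of_le neg_one_lt_zero (Nat.cast_nonneg n)
    have := integrable_rpow_mul_exp_neg_mul_sq hA hlt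
    simpa [Real.rpow_natCast] using this
  have hfun : (fun y : ℝ => r.eval y * rexp (-A * y ^ 2))
      = fun y => ∑ n ∈ Finset.range (r.natDegree + 1),
          r.coeff n * (y ^ n * rexp (-A * y ^ 2)) := by
    funext y
    rw [Polynomial.eval_eq_sum_range, Finset.sum_mul]
    simp [mul_assoc]
  rw [hfun]
  exact MeasureTheory.integrable_finset_sum _ fun n _ => (base n).const_mul _

lemma tendsto_pow_gauss {A : ℝ} (hA : 0 < A) (n : ℕ) :
    Filter.Tendsto (fun y : ℝ => y ^ n * rexp (-A * y ^ 2)) Filter.atTop (nhds 0) := by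
  have h1 : Filter.Tendsto (fun y : ℝ => A * y ^ 2) Filter.atTop Filter.atTop :=
    (Filter.tendsto_pow_atTop two_ne_zero).const_mul_atTop hA
  have h2 := (tendsto_pow_mul_exp_neg_atTop_nhds_zero n).comp h1
  have h3 : Filter.Tendsto
      (fun y : ℝ => A⁻¹ ^ n * ((A * y ^ 2) ^ n * rexp (-(A * y ^ 2))))
      Filter.atTop (nhds 0) := by
    simpa [Function.comp] using h2.const_mul (A⁻¹ ^ n)
  apply squeeze_zero' ?_ ?_ h3
  · filter_upwards [Filter.eventually_ge_atTop (1 : ℝ)] with y hy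
    have hy0 : (0:ℝ) ≤ y := by linarith
    positivity
  · filter_upwards [Filter.eventually_ge_atTop (1 : ℝ)] with y hy
    have hy0 : (0:ℝ) ≤ y := by linarith
    have hle : y ^ n ≤ (y ^ 2) ^ n := pow_le_pow_left₀ hy0 (by nlinarith) n
    have harith : (y ^ 2 : ℝ) ^ n * rexp (-A * y ^ 2)
        = A⁻¹ ^ n * ((A * y ^ 2) ^ n * rexp (-(A * y ^ 2))) := by
      rw [neg_mul, mul_pow, ← mul_assoc, ← mul_assoc, ← mul_pow,
        inv_mul_cancel₀ hA.ne', one_pow, one_mul]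
    calc y ^ n * rexp (-A * y ^ 2) ≤ (y ^ 2) ^ n * rexp (-A * y ^ 2) :=
          mul_le_mul_of_nonneg_right hle (Real.exp_nonneg _)
      _ = _ := harith

lemma tendsto_poly_gauss {A : ℝ} (hA : 0 < A) (r : Polynomial ℝ) :
    Filter.Tendsto (fun y : ℝ => r.eval y * rexp (-A * y ^ 2)) Filter.atTop (nhds 0) := by
  have hfun : (fun y : ℝ => r.eval y * rexp (-A * y ^ 2))
      = fun y => ∑ n ∈ Finset.range (r.natDegree + 1),
          r.coeff n * (y ^ n * rexp (-A * y ^ 2)) := by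
    funext y
    rw [Polynomial.eval_eq_sum_range, Finset.sum_mul]
    simp [mul_assoc]
  rw [hfun]
  have h : Filter.Tendsto
      (fun y : ℝ => ∑ n ∈ Finset.range (r.natDegree + 1),
        r.coeff n * (y ^ n * rexp (-A * y ^ 2))) Filter.atTop
      (nhds (∑ n ∈ Finset.range (r.natDegree + 1), r.coeff n * 0)) :=
    tendsto_finset_sum _ fun n _ => (tendsto_pow_gauss hA n).const_mul _
  simpa using h

end Stmt16Aux

open Stmt16Aux in
theorem stmt_16 (k : ℕ) (A a b : ℝ) (hA : 0 < A) :
    (∑ i ∈ Finset.range (2 * k + 1),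
      ((2 * k + 1).choose (i + 1) : ℝ) * (a ^ (i + 1) + b ^ (i + 1)) *
        (pd2^[i] (pd1^[2 * k - i]
          (fun h : ℝ × ℝ => Real.exp (-A * (h.2 ^ 2 - (a + b) * h.1 * h.2 + h.1 ^ 2)))) (0, 0)))
    + 2 * ∫ x₂ in Set.Ioi (0 : ℝ),
        (pd1^[2 * k + 1]
          (fun x : ℝ × ℝ => Real.exp (-A * (x.2 ^ 2 + (a + b) * x.1 * x.2 + x.1 ^ 2)))) (0, x₂)
    = 0 := by
  classical
  set β : ℝ := -(a + b) with hβ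
  set P : Mv := ∑ i ∈ Finset.range (2 * k + 1),
      (((2 * k + 1).choose (i + 1) : ℝ) * (a ^ (i + 1) + b ^ (i + 1))) •
        ((DY A β ^ i) ((DX A β ^ (2 * k - i)) 1)) with hP
  -- the f-slice as Φ
  have hfΦ : ∀ x y : ℝ,
      Real.exp (-A * (y ^ 2 - (a + b) * x * y + x ^ 2)) = Φ A β 1 x y := by
    intro x y
    rw [Φ, map_one, one_mul, eval_qp]
    congr 1
    rw [hβ]; ring
  -- sum terms
  have hterm : ∀ i, i ∈ Finset.range (2 * k + 1) →
      pd2^[i] (pd1^[2 * k - i]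
        (fun h : ℝ × ℝ => Real.exp (-A * (h.2 ^ 2 - (a + b) * h.1 * h.2 + h.1 ^ 2)))) (0, 0)
      = Φ A β ((DY A β ^ i) ((DX A β ^ (2 * k - i)) 1)) 0 0 := by
    intro i _
    rw [pd2_iter]
    have hin : (fun t : ℝ => pd1^[2 * k - i]
          (fun h : ℝ × ℝ => Real.exp (-A * (h.2 ^ 2 - (a + b) * h.1 * h.2 + h.1 ^ 2))) (0, t))
        = fun t => Φ A β ((DX A β ^ (2 * k - i)) 1) 0 t := by
      funext t
      rw [pd1_iter]
      have : (fun s : ℝ => Real.exp (-A * (t ^ 2 - (a + b) * s * t + s ^ 2)))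
          = fun s => Φ A β 1 s t := funext fun s => hfΦ s t
      rw [this, deriv_iter_x]
    rw [hin, deriv_iter_y]
  have hsum : (∑ i ∈ Finset.range (2 * k + 1),
      ((2 * k + 1).choose (i + 1) : ℝ) * (a ^ (i + 1) + b ^ (i + 1)) *
        (pd2^[i] (pd1^[2 * k - i]
          (fun h : ℝ × ℝ => Real.exp (-A * (h.2 ^ 2 - (a + b) * h.1 * h.2 + h.1 ^ 2)))) (0, 0)))
      = Φ A β P 0 0 := by
    rw [hP, Φ_sum]
    refine Finset.sum_congr rfl fun i hi => ?_
    rw [Φ_smul, hterm i hi]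
  -- Dy P expansion
  have hDyP : DY A β P = ((DX A β + a • DY A β) ^ (2 * k + 1)) 1
      + ((DX A β + b • DY A β) ^ (2 * k + 1)) 1 - (2 : ℝ) • ((DX A β ^ (2 * k + 1)) 1) := by
    rw [diag_pow_apply, diag_pow_apply]
    rw [← Finset.sum_add_distrib]
    have hcomb : ∀ j ∈ Finset.range (2 * k + 1 + 1),
        ((((2 * k + 1).choose j : ℕ) : ℝ) * a ^ j) • ((DY A β ^ j) ((DX A β ^ (2 * k + 1 - j)) 1))
          + ((((2 * k + 1).choose j : ℕ) : ℝ) * b ^ j) • ((DY A β ^ j) ((DX A β ^ (2 * k + 1 - j)) 1))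
        = ((((2 * k + 1).choose j : ℕ) : ℝ) * (a ^ j + b ^ j)) •
            ((DY A β ^ j) ((DX A β ^ (2 * k + 1 - j)) 1)) := by
      intro j _
      rw [← add_smul, mul_add]
    rw [Finset.sum_congr rfl hcomb, Finset.sum_range_succ']
    simp only [Nat.choose_zero_right, Nat.cast_one, pow_zero, Nat.sub_zero,
      Nat.succ_sub_succ_eq_sub]
    rw [hP, map_sum]
    have : ∀ i ∈ Finset.range (2 * k + 1),
        DY A β ((((2 * k + 1).choose (i + 1) : ℝ) * (a ^ (i + 1) + b ^ (i + 1))) •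
          ((DY A β ^ i) ((DX A β ^ (2 * k - i)) 1)))
        = ((((2 * k + 1).choose (i + 1) : ℕ) : ℝ) * (a ^ (i + 1) + b ^ (i + 1))) •
            ((DY A β ^ (i + 1)) ((DX A β ^ (2 * k - i)) 1)) := by
      intro i _
      rw [map_smul, show DY A β ^ (i + 1) = DY A β * DY A β ^ i from pow_succ' _ _,
        Module.End.mul_apply]
    rw [Finset.sum_congr rfl this]
    simp only [pow_zero, Module.End.one_apply]
    norm_num
  -- parity cancellation
  have hpar : ∀ y : ℝ,
      Φ A β (((DX A β + a • DY A β) ^ (2 * k + 1)) 1) 0 y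
        + Φ A β (((DX A β + b • DY A β) ^ (2 * k + 1)) 1) 0 y = 0 := by
    intro y
    have e1 : Φ A β (((DX A β + a • DY A β) ^ (2 * k + 1)) 1) 0 y
        = deriv^[2 * k + 1] (fun s => Φ A β 1 s (y + a * s)) 0 := by
      rw [deriv_iter_diag]
      norm_num
    have e2 : Φ A β (((DX A β + b • DY A β) ^ (2 * k + 1)) 1) 0 y
        = deriv^[2 * k + 1] (fun s => Φ A β 1 s (y + b * s)) 0 := by
      rw [deriv_iter_diag]
      norm_num
    have hrefl : (fun s : ℝ => Φ A β 1 s (y + b * s))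
        = fun s => (fun u => Φ A β 1 u (y + a * u)) (-s) := by
      funext s
      simp only [Φ, map_one, one_mul, eval_qp]
      congr 1
      rw [hβ]; ring
    rw [e1, e2, hrefl, deriv_iter_comp_neg (fun u => Φ A β 1 u (y + a * u)) (2 * k + 1) 0,
      neg_zero]
    have : (-1 : ℝ) ^ (2 * k + 1) = -1 := Odd.neg_one_pow ⟨k, by ring⟩
    rw [this]
    ring
  -- the integrand
  have hint : ∀ y : ℝ,
      pd1^[2 * k + 1]
        (fun x : ℝ × ℝ => Real.exp (-A * (x.2 ^ 2 + (a + b) * x.1 * x.2 + x.1 ^ 2))) (0, y)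
      = -Φ A β ((DX A β ^ (2 * k + 1)) 1) 0 y := by
    intro y
    rw [pd1_iter]
    have hg : (fun t : ℝ => Real.exp (-A * (y ^ 2 + (a + b) * t * y + t ^ 2)))
        = fun s => (fun u => Φ A β 1 u y) (-s) := by
      funext s
      simp only [Φ, map_one, one_mul, eval_qp]
      congr 1
      rw [hβ]; ring
    rw [hg, deriv_iter_comp_neg (fun u => Φ A β 1 u y) (2 * k + 1) 0, neg_zero, deriv_iter_x]
    have : (-1 : ℝ) ^ (2 * k + 1) = -1 := Odd.neg_one_pow ⟨k, by ring⟩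
    rw [this]
    ring
  -- derivative of N
  have hN' : ∀ y : ℝ, Φ A β (DY A β P) 0 y
      = -2 * Φ A β ((DX A β ^ (2 * k + 1)) 1) 0 y := by
    intro y
    rw [hDyP, Φ_sub, Φ_add, Φ_smul]
    have := hpar y
    linarith
  have hNderiv : ∀ y : ℝ, HasDerivAt (fun s => Φ A β P 0 s) (Φ A β (DY A β P) 0 y) y :=
    fun y => hasDerivAt_Φ_y A β P 0 y
  -- integrability and decay
  have hInt : MeasureTheory.IntegrableOn (fun y => Φ A β (DY A β P) 0 y) (Set.Ioi 0) := by
    have hfun : (fun y : ℝ => Φ A β (DY A β P) 0 y)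
        = fun y => (sl (DY A β P)).eval y * Real.exp (-A * y ^ 2) :=
      funext fun y => Φ_at0 A β _ y
    rw [hfun]
    exact (integrable_poly_gauss hA _).integrableOn
  have hTend : Filter.Tendsto (fun s => Φ A β P 0 s) Filter.atTop (nhds 0) := by
    have hfun : (fun y : ℝ => Φ A β P 0 y)
        = fun y => (sl P).eval y * Real.exp (-A * y ^ 2) := funext fun y => Φ_at0 A β _ y
    rw [hfun]
    exact tendsto_poly_gauss hA _
  have hFTC := MeasureTheory.integral_Ioi_of_hasDerivAt_of_tendsto'
    (fun y _ => hNderiv y) hInt hTend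
  -- rewrite the integral
  have hIeq : (∫ x₂ in Set.Ioi (0 : ℝ),
        pd1^[2 * k + 1]
          (fun x : ℝ × ℝ => Real.exp (-A * (x.2 ^ 2 + (a + b) * x.1 * x.2 + x.1 ^ 2))) (0, x₂))
      = (1 / 2 : ℝ) * ∫ y in Set.Ioi (0 : ℝ), Φ A β (DY A β P) 0 y := by
    rw [show (fun x₂ : ℝ => pd1^[2 * k + 1]
          (fun x : ℝ × ℝ => Real.exp (-A * (x.2 ^ 2 + (a + b) * x.1 * x.2 + x.1 ^ 2))) (0, x₂))
        = fun y => (1 / 2 : ℝ) * Φ A β (DY A β P) 0 y from funext fun y => by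
          rw [hint y, hN' y]; ring]
    rw [MeasureTheory.integral_const_mul]
  rw [hsum, hIeq, hFTC]
  ring

end
end
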